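/- Let a₁ < a₂ be relatively prime positive integers with a₂ ≥ 3. Then there exists a real θ such that cos(a₁θ) + cos(a₂θ) ≤ −3/2. -/

import Mathlib

open Real

theorem exists_cos_sum_le_neg_three_halves (a₁ a₂ : ℕ) (h₁ : 0 < a₁)
    (h₁₂ : a₁ < a₂) (hgcd : Nat.gcd a₁ a₂ = 1) (h₂ : 3 ≤ a₂) :
    ∃ θ : ℝ, Real.cos (a₁ * θ) + Real.cos (a₂ * θ) ≤ -3/2 := by
  set s : ℕ := a₁ + a₂ with hs
  have hs4 : 4 ≤ s := by omega
  have hsne : (s : ℝ) ≠ 0 := by positivity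
  haveI : NeZero s := ⟨by omega⟩
  set m : ℕ := (s + 1) / 2 with hm
  have hms : m < s := by omega
  have hcop : Nat.Coprime a₁ s := by
    unfold Nat.Coprime
    rw [hs, Nat.add_comm]
    exact Nat.coprime_add_self_right.mpr hgcd
  have hu : IsUnit ((a₁ : ZMod s)) := (ZMod.isUnit_iff_coprime a₁ s).mpr hcop
  set k : ℕ := ((a₁ : ZMod s)⁻¹ * (m : ZMod s)).val with hk
  have hmod : a₁ * k ≡ m [MOD s] := by
    rw [← ZMod.natCast_eq_natCast_iff]
    push_cast
    rw [hk, ZMod.natCast_val, ZMod.cast_id, ← mul_assoc,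
      ZMod.mul_inv_of_unit _ hu, one_mul]
  have hmm : (a₁ * k) % s = m := by
    rw [Nat.ModEq] at hmod
    rw [hmod, Nat.mod_eq_of_lt hms]
  set j : ℕ := (a₁ * k) / s with hj
  have hdecomp : a₁ * k = s * j + m := by
    rw [hj, ← hmm]; exact (Nat.div_add_mod _ _).symm
  set θ : ℝ := 2 * π * k / s with hθ
  refine ⟨θ, ?_⟩
  have hjr : (a₁ : ℝ) * k = s * j + m := by exact_mod_cast hdecomp
  set t : ℝ := 2 * π * m / s with ht
  have e1 : (a₁ : ℝ) * θ = t + j * (2 * π) := by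
    have h' : (a₁ : ℝ) * θ = ((a₁ : ℝ) * k) * (2 * π) / s := by rw [hθ]; ring
    rw [h', hjr, ht]; field_simp; ring
  have c1 : Real.cos (a₁ * θ) = Real.cos t := by rw [e1, Real.cos_add_nat_mul_two_pi]
  have e2 : (a₂ : ℝ) * θ = (k : ℝ) * (2 * π) - (a₁ : ℝ) * θ := by
    have ha2 : (a₂ : ℝ) = s - a₁ := by rw [hs]; push_cast; ring
    rw [ha2, hθ]; field_simp
  have c2 : Real.cos (a₂ * θ) = Real.cos t := by
    rw [e2, Real.cos_nat_mul_two_pi_sub, c1]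
  -- now bound cos t
  have key : s ≤ 2 * m ∧ 5 * (2 * m - s) ≤ s := by omega
  have h1 : (s : ℝ) ≤ 2 * m := by exact_mod_cast key.1
  have h2 : 5 * (2 * (m : ℝ) - s) ≤ s := by
    have := key.2
    have h2m : (2 * m - s : ℕ) = (2 * (m:ℝ) - s) := by
      push_cast [Nat.cast_sub key.1]; ring
    calc 5 * (2 * (m : ℝ) - s) = ((5 * (2 * m - s) : ℕ) : ℝ) := by push_cast [h2m]; ring
      _ ≤ s := by exact_mod_cast this
  have hspos : (0:ℝ) < s := by positivity
  have htpi : 0 ≤ t - π ∧ t - π ≤ π / 5 := by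
    constructor
    · have heq : t - π = π * (2 * m - s) / s := by rw [ht]; field_simp
      rw [heq]
      have h0 : (0:ℝ) ≤ 2 * (m:ℝ) - s := by linarith
      exact div_nonneg (mul_nonneg pi_pos.le h0) hspos.le
    · rw [ht, div_sub' hsne, div_le_div_iff₀ hspos (by norm_num : (0:ℝ) < 5)]
      nlinarith [pi_pos]
  have hcos5 : Real.cos (π / 5) ≤ Real.cos (t - π) :=
    Real.cos_le_cos_of_nonneg_of_le_pi htpi.1
      (by linarith [pi_pos]) htpi.2
  have hcosval : (3:ℝ)/4 ≤ Real.cos (π / 5) := by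
    rw [Real.cos_pi_div_five]
    nlinarith [Real.sq_sqrt (by norm_num : (5:ℝ) ≥ 0), Real.sqrt_nonneg 5]
  have hct : Real.cos t ≤ -(3/4) := by
    have : Real.cos (t - π) = -Real.cos t := Real.cos_sub_pi t
    have h' : Real.cos t = -Real.cos (t - π) := by rw [this]; ring
    rw [h']
    linarith
  rw [c1, c2]
  linarith
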